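/- As m → ∞, the partial exponential sum satisfies Σ_{i=0}^{m} (m+1)^i/i! ~ e^{m+1}/2, i.e., lim_{m→∞} e^{-(m+1)}·Σ_{i=0}^{m}(m+1)^i/i! = 1/2. -/

import Mathlib

open Finset Real Filter

open Topology MeasureTheory

lemma hasDerivAt_log1p {x : ℝ} (h : 0 < 1 + x) :
    HasDerivAt (fun y : ℝ => Real.log (1 + y)) (1/(1+x)) x := by
  have h1 : HasDerivAt (fun y : ℝ => 1 + y) 1 x := (hasDerivAt_id x).const_add 1
  have h2 := (Real.hasDerivAt_log (ne_of_gt h)).comp x h1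
  simpa [Function.comp_def] using h2

lemma log_lower {x : ℝ} (hx : 0 ≤ x) : x - x^2/2 ≤ Real.log (1 + x) := by
  have key : ∀ y ∈ Set.Ici (0:ℝ), HasDerivAt (fun y => Real.log (1+y) - (y - y^2/2))
      (1/(1+y) - (1 - y)) y := by
    intro y hy
    have h : (0:ℝ) < 1 + y := by simp at hy; linarith
    exact (hasDerivAt_log1p h).sub (((hasDerivAt_id y).sub
      (((hasDerivAt_pow 2 y).div_const 2))).congr_deriv (by ring))
  have mono : MonotoneOn (fun y => Real.log (1+y) - (y - y^2/2)) (Set.Ici (0:ℝ)) := by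
    apply monotoneOn_of_deriv_nonneg (convex_Ici 0)
    · exact fun y hy => ((key y hy).continuousAt.continuousWithinAt)
    · intro y hy
      rw [interior_Ici] at hy
      exact ((key y (Set.mem_Ici.mpr (le_of_lt hy))).differentiableAt).differentiableWithinAt
    · intro y hy
      rw [interior_Ici] at hy
      rw [(key y (Set.mem_Ici.mpr (le_of_lt hy))).deriv]
      have h : (0:ℝ) < 1 + y := by simp at hy; linarith
      rw [div_sub' (ne_of_gt h)]
      apply div_nonneg _ h.le
      nlinarith [Set.mem_Ioi.mp hy]
  have := mono (Set.self_mem_Ici) (Set.mem_Ici.mpr hx) hx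
  simp at this
  linarith

lemma log_upper {x : ℝ} (hx : 0 ≤ x) : Real.log (1 + x) ≤ x - x^2/2 + x^3/3 := by
  have key : ∀ y ∈ Set.Ici (0:ℝ), HasDerivAt (fun y => (y - y^2/2 + y^3/3) - Real.log (1+y))
      ((1 - y + y^2) - 1/(1+y)) y := by
    intro y hy
    have h : (0:ℝ) < 1 + y := by simp at hy; linarith
    exact ((((hasDerivAt_id y).sub ((hasDerivAt_pow 2 y).div_const 2)).add
      ((hasDerivAt_pow 3 y).div_const 3)).congr_deriv (by push_cast; ring)).sub
      (hasDerivAt_log1p h)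
  have mono : MonotoneOn (fun y => (y - y^2/2 + y^3/3) - Real.log (1+y)) (Set.Ici (0:ℝ)) := by
    apply monotoneOn_of_deriv_nonneg (convex_Ici 0)
    · exact fun y hy => ((key y hy).continuousAt.continuousWithinAt)
    · intro y hy
      rw [interior_Ici] at hy
      exact ((key y (Set.mem_Ici.mpr (le_of_lt hy))).differentiableAt).differentiableWithinAt
    · intro y hy
      rw [interior_Ici] at hy
      rw [(key y (Set.mem_Ici.mpr (le_of_lt hy))).deriv]
      have h : (0:ℝ) < 1 + y := by simp at hy; linarith
      rw [sub_div' (ne_of_gt h)]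
      apply div_nonneg _ h.le
      nlinarith [Set.mem_Ioi.mp hy]
  have := mono (Set.self_mem_Ici) (Set.mem_Ici.mpr hx) hx
  simp at this
  linarith

lemma log_linear {x : ℝ} (hx : 1 ≤ x) : Real.log (1 + x) ≤ x * Real.log 2 := by
  have h2 : (0.6931471803 : ℝ) < Real.log 2 := Real.log_two_gt_d9
  have hexp : (x-1) * Real.log 2 + 1 ≤ Real.exp ((x-1) * Real.log 2) :=
    Real.add_one_le_exp _
  have : (1:ℝ) + x ≤ Real.exp (x * Real.log 2) := by
    have : Real.exp (x * Real.log 2) = Real.exp ((x-1) * Real.log 2) * 2 := by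
      rw [show x*Real.log 2 = (x-1)*Real.log 2 + Real.log 2 by ring, Real.exp_add,
        Real.exp_log (by norm_num : (0:ℝ) < 2)]
    rw [this]
    nlinarith
  calc Real.log (1 + x) ≤ Real.log (Real.exp (x * Real.log 2)) :=
        Real.log_le_log (by linarith) this
    _ = x * Real.log 2 := Real.log_exp _


noncomputable def P (m : ℕ) (t : ℝ) : ℝ :=
  ∑ k ∈ Finset.range (m+1), ((m.factorial : ℝ)/(k.factorial : ℝ)) * t^k

lemma hasDerivAt_P (m : ℕ) (t : ℝ) : HasDerivAt (P m) (P m t - t^m) t := by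
  have h : HasDerivAt (fun t : ℝ => ∑ k ∈ Finset.range (m+1),
      ((m.factorial : ℝ)/(k.factorial : ℝ)) * t^k)
      (∑ k ∈ Finset.range (m+1),
        ((m.factorial : ℝ)/(k.factorial : ℝ)) * (k * t^(k-1))) t := by
    apply HasDerivAt.fun_sum
    intro k _
    exact (hasDerivAt_pow k t).const_mul _
  convert h using 1
  · rfl
  rw [Finset.sum_range_succ']
  simp only [Nat.cast_zero, pow_zero, Nat.factorial_zero, Nat.cast_one, zero_mul, mul_zero,
    add_zero, Nat.add_sub_cancel]
  push_cast
  have : ∀ i ∈ Finset.range m, ((m.factorial : ℝ)/((i+1).factorial : ℝ)) * (((i:ℝ)+1) * t^i)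
      = ((m.factorial : ℝ)/(i.factorial : ℝ)) * t^i := by
    intro i _
    rw [Nat.factorial_succ]
    push_cast
    have h1 : (i.factorial : ℝ) ≠ 0 := Nat.cast_ne_zero.mpr i.factorial_ne_zero
    field_simp
  rw [Finset.sum_congr rfl this]
  unfold P
  rw [Finset.sum_range_succ]
  have : ((m.factorial : ℝ)/(m.factorial : ℝ)) = 1 := by
    rw [div_self (Nat.cast_ne_zero.mpr m.factorial_ne_zero)]
  rw [this]
  ring

noncomputable def G (m : ℕ) (t : ℝ) : ℝ := -(Real.exp (-t) * P m t)

lemma hasDerivAt_G (m : ℕ) (t : ℝ) : HasDerivAt (G m) (t^m * Real.exp (-t)) t := by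
  have he : HasDerivAt (fun t : ℝ => Real.exp (-t)) (-Real.exp (-t)) t := by
    simpa [Function.comp_def] using (Real.hasDerivAt_exp (-t)).comp t (hasDerivAt_neg t)
  have h := ((he.mul (hasDerivAt_P m t)).neg)
  exact h.congr_deriv (by ring)

lemma G_tendsto (m : ℕ) : Tendsto (G m) atTop (𝓝 0) := by
  have h : Tendsto (fun t : ℝ => ∑ k ∈ Finset.range (m+1),
      ((m.factorial : ℝ)/(k.factorial : ℝ)) * (t^k * Real.exp (-t))) atTop (𝓝 0) := by
    have := tendsto_finset_sum (Finset.range (m+1)) (fun k _ =>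
      ((Real.tendsto_pow_mul_exp_neg_atTop_nhds_zero k).const_mul
        ((m.factorial : ℝ)/(k.factorial : ℝ))))
    simpa using this
  have heq : ∀ t : ℝ, G m t = -(∑ k ∈ Finset.range (m+1),
      ((m.factorial : ℝ)/(k.factorial : ℝ)) * (t^k * Real.exp (-t))) := by
    intro t
    unfold G P
    rw [Finset.mul_sum]
    congr 1
    apply Finset.sum_congr rfl
    intro k _
    ring
  rw [show (0:ℝ) = -0 by norm_num]
  exact (h.neg).congr (fun t => (heq t).symm)


lemma integral_eq (m : ℕ) :
    ∫ s in Set.Ioi (0:ℝ),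
      ((((m:ℝ)+1) + Real.sqrt ((m:ℝ)+1) * s)^m
        * Real.exp (-(((m:ℝ)+1) + Real.sqrt ((m:ℝ)+1) * s))) * Real.sqrt ((m:ℝ)+1)
    = Real.exp (-((m:ℝ)+1)) * P m ((m:ℝ)+1) := by
  set l : ℝ := (m:ℝ)+1 with hl
  set σ : ℝ := Real.sqrt ((m:ℝ)+1) with hσ
  have hσpos : 0 < σ := Real.sqrt_pos.mpr (by positivity)
  have hd : ∀ s ∈ Set.Ici (0:ℝ),
      HasDerivAt (fun s => G m (l + σ * s)) (((l + σ*s)^m * Real.exp (-(l + σ*s))) * σ) s := by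
    intro s _
    simpa [Function.comp_def] using (hasDerivAt_G m (l + σ*s)).comp s (((hasDerivAt_id s).const_mul σ).const_add l)
  have hnonneg : ∀ s ∈ Set.Ioi (0:ℝ), 0 ≤ ((l + σ*s)^m * Real.exp (-(l + σ*s))) * σ := by
    intro s hs
    have hs' := Set.mem_Ioi.mp hs
    have hm : (0:ℝ) ≤ (m:ℝ) := Nat.cast_nonneg m
    have h0 : (0:ℝ) ≤ l + σ*s := by nlinarith [mul_pos hσpos hs']
    positivity
  have htend : Tendsto (fun s => G m (l + σ * s)) atTop (𝓝 0) := by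
    apply (G_tendsto m).comp
    apply tendsto_atTop_add_const_left
    exact (tendsto_id.const_mul_atTop hσpos)
  have := integral_Ioi_of_hasDerivAt_of_nonneg' hd hnonneg htend
  rw [this]
  simp [G]

theorem target_eq (m : ℕ) :
    Real.exp (-((m : ℝ) + 1)) *
        ∑ i ∈ Finset.range (m + 1), ((m : ℝ) + 1) ^ i / (Nat.factorial i : ℝ)
    = (Real.sqrt ((m:ℝ)+1) * ((m:ℝ)+1)^m * Real.exp (-((m:ℝ)+1)) / (m.factorial : ℝ)) *
      ∫ s in Set.Ioi (0:ℝ),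
        (1 + s / Real.sqrt ((m:ℝ)+1))^m * Real.exp (-(Real.sqrt ((m:ℝ)+1) * s)) := by
  set l : ℝ := (m:ℝ)+1 with hl
  set σ : ℝ := Real.sqrt ((m:ℝ)+1) with hσ
  have hσpos : 0 < σ := Real.sqrt_pos.mpr (by positivity)
  have hσ2 : σ * σ = l := Real.mul_self_sqrt (by positivity)
  have hfact : (m.factorial : ℝ) ≠ 0 := Nat.cast_ne_zero.mpr m.factorial_ne_zero
  have hP : P m l = (m.factorial : ℝ) * ∑ i ∈ Finset.range (m+1), l^i / (i.factorial : ℝ) := by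
    unfold P
    rw [Finset.mul_sum]
    exact Finset.sum_congr rfl (fun k _ => by ring)
  have hpt : ∀ s : ℝ, ((l + σ*s)^m * Real.exp (-(l + σ*s))) * σ
      = (σ * l^m * Real.exp (-l)) * ((1 + s/σ)^m * Real.exp (-(σ*s))) := by
    intro s
    have hls : l * (s/σ) = σ * s := by rw [← hσ2]; field_simp
    have h1 : l + σ*s = l * (1 + s/σ) := by rw [mul_add, mul_one, hls]
    have h2 : -(l * (1 + s/σ)) = -l + -(σ*s) := by rw [mul_add, mul_one, hls]; ring
    rw [h1, mul_pow, h2, Real.exp_add]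
    ring
  have hint : (∫ s in Set.Ioi (0:ℝ), ((l + σ*s)^m * Real.exp (-(l + σ*s))) * σ)
      = (σ * l^m * Real.exp (-l)) *
        ∫ s in Set.Ioi (0:ℝ), (1 + s/σ)^m * Real.exp (-(σ*s)) := by
    rw [show (fun s => ((l + σ*s)^m * Real.exp (-(l + σ*s))) * σ)
      = fun s => (σ * l^m * Real.exp (-l)) * ((1 + s/σ)^m * Real.exp (-(σ*s)))
      from funext hpt]
    exact integral_const_mul _ _
  have key := integral_eq m
  rw [hint, hP] at key
  have : Real.exp (-l) * ∑ i ∈ Finset.range (m+1), l^i / (i.factorial : ℝ)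
      = (σ * l^m * Real.exp (-l) * ∫ s in Set.Ioi (0:ℝ), (1 + s/σ)^m * Real.exp (-(σ*s)))
        / (m.factorial : ℝ) := by
    rw [← hl] at key
    rw [eq_div_iff hfact, key]
    ring
  rw [this]
  ring


lemma c_eq (m : ℕ) :
    Real.sqrt ((m:ℝ)+1) * ((m:ℝ)+1)^m * Real.exp (-((m:ℝ)+1)) / (m.factorial : ℝ)
      = 1 / (Real.sqrt 2 * Stirling.stirlingSeq (m+1)) := by
  unfold Stirling.stirlingSeq
  have h1 : ((m+1 : ℕ) : ℝ) = (m:ℝ)+1 := by push_cast; ring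
  rw [div_pow, Real.exp_one_pow, h1, Real.sqrt_mul (by norm_num : (0:ℝ) ≤ 2) ((m:ℝ)+1)]
  have hfact : (m.factorial : ℝ) ≠ 0 := Nat.cast_ne_zero.mpr m.factorial_ne_zero
  have hfact1 : ((m+1).factorial : ℝ) ≠ 0 := Nat.cast_ne_zero.mpr (m+1).factorial_ne_zero
  have hs2 : Real.sqrt 2 ≠ 0 := by positivity
  have hsl : Real.sqrt ((m:ℝ)+1) ≠ 0 := by positivity
  have hexp : Real.exp ((m:ℝ)+1) ≠ 0 := Real.exp_ne_zero _
  have hexpm : Real.exp (-((m:ℝ)+1)) = 1 / Real.exp ((m:ℝ)+1) := by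
    rw [Real.exp_neg]; rw [inv_eq_one_div]
  have hfs : ((m+1).factorial : ℝ) = ((m:ℝ)+1) * (m.factorial : ℝ) := by
    rw [Nat.factorial_succ]; push_cast; ring
  rw [hexpm, hfs]
  have hml : (m * 1 : ℝ) = (m:ℝ) := by ring
  field_simp
  ring

lemma c_tendsto :
    Tendsto (fun m : ℕ =>
      Real.sqrt ((m:ℝ)+1) * ((m:ℝ)+1)^m * Real.exp (-((m:ℝ)+1)) / (m.factorial : ℝ))
      atTop (𝓝 (1 / (Real.sqrt 2 * Real.sqrt π))) := by
  simp only [c_eq]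
  have h1 : Tendsto (fun m : ℕ => Stirling.stirlingSeq (m+1)) atTop (𝓝 (Real.sqrt π)) :=
    Stirling.tendsto_stirlingSeq_sqrt_pi.comp (tendsto_add_atTop_nat 1)
  have h2 : Tendsto (fun m : ℕ => Real.sqrt 2 * Stirling.stirlingSeq (m+1)) atTop
      (𝓝 (Real.sqrt 2 * Real.sqrt π)) := h1.const_mul _
  have hne : Real.sqrt 2 * Real.sqrt π ≠ 0 := by positivity
  exact tendsto_const_nhds.div h2 hne


lemma g_exp_form (m : ℕ) {s : ℝ} (hs : 0 < s) :
    (1 + s / Real.sqrt ((m:ℝ)+1))^m * Real.exp (-(Real.sqrt ((m:ℝ)+1) * s))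
      = Real.exp ((m:ℝ) * Real.log (1 + s / Real.sqrt ((m:ℝ)+1))
          - Real.sqrt ((m:ℝ)+1) * s) := by
  have hσpos : 0 < Real.sqrt ((m:ℝ)+1) := Real.sqrt_pos.mpr (by positivity)
  have h1x : 0 < 1 + s / Real.sqrt ((m:ℝ)+1) := by positivity
  rw [sub_eq_add_neg, Real.exp_add, Real.exp_nat_mul, Real.exp_log h1x]

lemma g_bound (m : ℕ) {s : ℝ} (hs : 0 < s) :
    (1 + s / Real.sqrt ((m:ℝ)+1))^m * Real.exp (-(Real.sqrt ((m:ℝ)+1) * s))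
      ≤ Real.exp (-(s^2/12)) + Real.exp (-(s/5)) := by
  rcases Nat.eq_zero_or_pos m with hm | hm
  · subst hm
    norm_num
    calc Real.exp (-s) ≤ Real.exp (-(s/5)) := by
          apply Real.exp_le_exp.mpr; linarith
      _ ≤ _ := le_add_of_nonneg_left (Real.exp_pos _).le
  · set σ : ℝ := Real.sqrt ((m:ℝ)+1) with hσdef
    have hσpos : 0 < σ := Real.sqrt_pos.mpr (by positivity)
    have hσ1 : 1 ≤ σ := by
      rw [hσdef, Real.one_le_sqrt]
      have := Nat.cast_nonneg (α := ℝ) m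
      linarith
    have hσ2 : σ * σ = (m:ℝ)+1 := Real.mul_self_sqrt (by positivity)
    set x : ℝ := s / σ with hxdef
    have hx : 0 < x := div_pos hs hσpos
    have hσs : σ * s = ((m:ℝ)+1) * x := by
      rw [hxdef, ← hσ2]; field_simp
    rw [g_exp_form m hs]
    have hm1 : (1:ℝ) ≤ (m:ℝ) := by exact_mod_cast hm
    by_cases hx1 : x ≤ 1
    · have hlog := log_upper hx.le
      have hmul : (m:ℝ) * Real.log (1+x) ≤ (m:ℝ) * (x - x^2/2 + x^3/3) :=
        mul_le_mul_of_nonneg_left hlog (by positivity)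
      have hs2 : s^2 = ((m:ℝ)+1) * x^2 := by
        rw [hxdef, div_pow, ← hσ2]; field_simp
      have haux : (0:ℝ) ≤ x^2 * (1 - x) := mul_nonneg (by positivity) (by linarith)
      have h3 : (m:ℝ) * x^3 ≤ (m:ℝ) * x^2 := by
        nlinarith [mul_nonneg (by positivity : (0:ℝ) ≤ (m:ℝ)) haux]
      have hE : (m:ℝ) * Real.log (1+x) - σ * s ≤ -(s^2/12) := by
        rw [hσs]
        nlinarith [mul_nonneg (by positivity : (0:ℝ) ≤ (m:ℝ)) (sq_nonneg x)]
      calc Real.exp _ ≤ Real.exp (-(s^2/12)) := Real.exp_le_exp.mpr hE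
        _ ≤ _ := le_add_of_nonneg_right (Real.exp_pos _).le
    · push_neg at hx1
      have hlog := log_linear hx1.le
      have hl2 : Real.log 2 < 0.6931471808 := Real.log_two_lt_d9
      have hl2' : 0 < Real.log 2 := Real.log_pos (by norm_num)
      have hmul : (m:ℝ) * Real.log (1+x) ≤ (m:ℝ) * (x * Real.log 2) :=
        mul_le_mul_of_nonneg_left hlog (by positivity)
      have hkey : (m:ℝ) * x * Real.log 2 ≤ (m:ℝ) * x * 0.6931471808 :=
        mul_le_mul_of_nonneg_left hl2.le (by positivity)
      have hE : (m:ℝ) * Real.log (1+x) - σ * s ≤ -(s/5) := by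
        have h2 : s ≤ σ * s := by nlinarith
        have h1 : (m:ℝ) * (x * Real.log 2) - ((m:ℝ)+1) * x ≤ -(3/10) * (((m:ℝ)+1) * x) := by
          nlinarith [mul_pos (lt_of_lt_of_le one_pos hm1) hx]
        rw [hσs]
        rw [hσs] at h2
        nlinarith
      calc Real.exp _ ≤ Real.exp (-(s/5)) := Real.exp_le_exp.mpr hE
        _ ≤ _ := le_add_of_nonneg_left (Real.exp_pos _).le

lemma sqrt_tendsto_atTop : Tendsto (fun m : ℕ => Real.sqrt ((m:ℝ)+1)) atTop atTop := by
  apply Filter.Tendsto.comp (g := Real.sqrt)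
  · apply tendsto_atTop_atTop_of_monotone (fun a b h => Real.sqrt_le_sqrt h)
    intro b
    exact ⟨(max b 0)^2, by rw [Real.sqrt_sq (le_max_right b 0)]; exact le_max_left b 0⟩
  · exact tendsto_atTop_add_const_right _ 1 tendsto_natCast_atTop_atTop

lemma q_tendsto : Tendsto (fun m : ℕ => (m:ℝ)/((m:ℝ)+1)) atTop (𝓝 1) := by
  exact_mod_cast tendsto_natCast_div_add_atTop (1:ℝ)

lemma g_pointwise {s : ℝ} (hs : 0 < s) :
    Tendsto (fun m : ℕ =>
        (1 + s / Real.sqrt ((m:ℝ)+1))^m * Real.exp (-(Real.sqrt ((m:ℝ)+1) * s)))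
      atTop (𝓝 (Real.exp (-(1/2) * s^2))) := by
  rw [show -(1/2) * s^2 = -(s^2/2) by ring]
  set σ : ℕ → ℝ := fun m => Real.sqrt ((m:ℝ)+1) with hσdef
  set E : ℕ → ℝ := fun m =>
    (m:ℝ) * Real.log (1 + s / σ m) - σ m * s with hEdef
  have hσpos : ∀ m : ℕ, 0 < σ m := fun m => Real.sqrt_pos.mpr (by positivity)
  have hσ2 : ∀ m : ℕ, σ m * σ m = (m:ℝ)+1 := fun m => Real.mul_self_sqrt (by positivity)
  have hσs : ∀ m : ℕ, σ m * s = ((m:ℝ)+1) * (s / σ m) := by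
    intro m
    rw [← hσ2 m]
    field_simp
  have hx2 : ∀ m : ℕ, (s/σ m)^2 = s^2/((m:ℝ)+1) := by
    intro m
    rw [div_pow]
    congr 1
    rw [sq]
    exact hσ2 m
  have hx3 : ∀ m : ℕ, (s/σ m)^3 = s^3/(((m:ℝ)+1) * σ m) := by
    intro m
    rw [div_pow]
    congr 1
    rw [show (σ m)^3 = (σ m * σ m) * σ m by ring, hσ2 m]
  have hE : Tendsto E atTop (𝓝 (-(s^2/2))) := by
    set L : ℕ → ℝ := fun m => -(s / σ m) - ((m:ℝ)/((m:ℝ)+1)) * (s^2/2) with hL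
    set U : ℕ → ℝ := fun m => L m + (((m:ℝ)/((m:ℝ)+1)) * (s^3/3)) / σ m with hU
    have hLE : ∀ m, L m ≤ E m := by
      intro m
      have hx : 0 < s / σ m := div_pos hs (hσpos m)
      have hlog := log_lower hx.le
      have hmul : (m:ℝ) * (s/σ m - (s/σ m)^2/2) ≤ (m:ℝ) * Real.log (1 + s/σ m) :=
        mul_le_mul_of_nonneg_left hlog (by positivity)
      have hm1 : ((m:ℝ)+1) ≠ 0 := by positivity
      have hid : L m = (m:ℝ) * (s/σ m - (s/σ m)^2/2) - σ m * s := by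
        simp only [hL]
        rw [mul_sub, hσs m, hx2 m]
        field_simp
        ring
      rw [hid]
      simp only [hEdef]
      linarith
    have hUE : ∀ m, E m ≤ U m := by
      intro m
      have hx : 0 < s / σ m := div_pos hs (hσpos m)
      have hlog := log_upper hx.le
      have hmul : (m:ℝ) * Real.log (1 + s/σ m)
          ≤ (m:ℝ) * (s/σ m - (s/σ m)^2/2 + (s/σ m)^3/3) :=
        mul_le_mul_of_nonneg_left hlog (by positivity)
      have hm1 : ((m:ℝ)+1) ≠ 0 := by positivity
      have hid : U m = (m:ℝ) * (s/σ m - (s/σ m)^2/2 + (s/σ m)^3/3) - σ m * s := by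
        simp only [hU, hL]
        rw [show (m:ℝ) * (s/σ m - (s/σ m)^2/2 + (s/σ m)^3/3)
            = (m:ℝ) * (s/σ m - (s/σ m)^2/2) + (m:ℝ) * ((s/σ m)^3/3) by ring]
        rw [mul_sub, hσs m, hx2 m, hx3 m]
        field_simp
        ring
      rw [hid]
      simp only [hEdef]
      linarith
    have hLt : Tendsto L atTop (𝓝 (-(s^2/2))) := by
      have h1 : Tendsto (fun m : ℕ => s / σ m) atTop (𝓝 0) :=
        tendsto_const_nhds.div_atTop sqrt_tendsto_atTop
      have h2 : Tendsto (fun m : ℕ => ((m:ℝ)/((m:ℝ)+1)) * (s^2/2)) atTop (𝓝 (s^2/2)) := by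
        simpa using q_tendsto.mul_const (s^2/2)
      have h3 := (h1.neg).sub h2
      simp only [neg_zero, zero_sub] at h3
      exact h3
    have hUt : Tendsto U atTop (𝓝 (-(s^2/2))) := by
      have h3 : Tendsto (fun m : ℕ => (((m:ℝ)/((m:ℝ)+1)) * (s^3/3)) / σ m) atTop (𝓝 0) :=
        (q_tendsto.mul_const (s^3/3)).div_atTop sqrt_tendsto_atTop
      simpa using hLt.add h3
    exact tendsto_of_tendsto_of_tendsto_of_le_of_le hLt hUt hLE hUE
  have hcomp := (Real.continuous_exp.tendsto _).comp hE
  apply hcomp.congr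
  intro m
  exact (g_exp_form m hs).symm


lemma A_tendsto :
    Tendsto (fun m : ℕ => ∫ s in Set.Ioi (0:ℝ),
        (1 + s / Real.sqrt ((m:ℝ)+1))^m * Real.exp (-(Real.sqrt ((m:ℝ)+1) * s)))
      atTop (𝓝 (Real.sqrt (π / (1/2)) / 2)) := by
  have key : Tendsto (fun m : ℕ => ∫ s in Set.Ioi (0:ℝ),
        (1 + s / Real.sqrt ((m:ℝ)+1))^m * Real.exp (-(Real.sqrt ((m:ℝ)+1) * s)))
      atTop (𝓝 (∫ s in Set.Ioi (0:ℝ), Real.exp (-(1/2) * s^2))) := by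
    apply MeasureTheory.tendsto_integral_of_dominated_convergence
      (bound := fun s => Real.exp (-(s^2/12)) + Real.exp (-(s/5)))
    · intro m
      apply Continuous.aestronglyMeasurable
      fun_prop
    · have h1 : Integrable (fun s : ℝ => Real.exp (-(1/12) * s^2)) :=
        integrable_exp_neg_mul_sq (by norm_num)
      simp only [show ∀ s : ℝ, -(1/12) * s^2 = -(s^2/12) from fun s => by ring] at h1
      have h2 : IntegrableOn (fun s : ℝ => Real.exp (-(1/5) * s)) (Set.Ioi 0) :=
        exp_neg_integrableOn_Ioi 0 (by norm_num)
      simp only [show ∀ s : ℝ, -(1/5) * s = -(s/5) from fun s => by ring] at h2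
      exact h1.integrableOn.add h2
    · intro m
      rw [ae_restrict_iff' measurableSet_Ioi]
      filter_upwards with s hs
      have hσpos : 0 < Real.sqrt ((m:ℝ)+1) := Real.sqrt_pos.mpr (by positivity)
      have h0 : (0:ℝ) ≤ (1 + s / Real.sqrt ((m:ℝ)+1))^m
          * Real.exp (-(Real.sqrt ((m:ℝ)+1) * s)) := by
        have : (0:ℝ) < 1 + s / Real.sqrt ((m:ℝ)+1) := by
          have := Set.mem_Ioi.mp hs
          positivity
        positivity
      rw [Real.norm_eq_abs, abs_of_nonneg h0]
      exact g_bound m (Set.mem_Ioi.mp hs)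
    · rw [ae_restrict_iff' measurableSet_Ioi]
      filter_upwards with s hs
      exact g_pointwise (Set.mem_Ioi.mp hs)
  rwa [integral_gaussian_Ioi (1/2)] at key

theorem partial_exp_sum_asymptotic :
    Tendsto
      (fun m : ℕ =>
        Real.exp (-((m : ℝ) + 1)) *
          ∑ i ∈ Finset.range (m + 1), ((m : ℝ) + 1) ^ i / (Nat.factorial i : ℝ))
      atTop (nhds (1 / 2)) := by
  have h := c_tendsto.mul A_tendsto
  have hval : (1 / (Real.sqrt 2 * Real.sqrt π)) * (Real.sqrt (π / (1/2)) / 2) = 1/2 := by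
    have hπ : (0:ℝ) < π := Real.pi_pos
    have h2 : Real.sqrt (π / (1/2)) = Real.sqrt 2 * Real.sqrt π := by
      rw [show π / (1/2) = 2 * π by ring, Real.sqrt_mul (by norm_num) π]
    rw [h2]
    have ha : (0:ℝ) < Real.sqrt 2 := by positivity
    have hb : (0:ℝ) < Real.sqrt π := Real.sqrt_pos.mpr hπ
    field_simp
  rw [hval] at h
  exact h.congr (fun m => (target_eq m).symm)
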